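/- Let k ≥ 1 and let I be a (k+1)-element subset of {1, 2, …, 2k+3} containing no two consecutive integers, with 1 ∈ I and 2k+3 ∉ I. Then exactly 2 of the (k+1)-element subsets J of {1, 2, …, 2k+3} \ I alternate with I. -/

import Mathlib

/-- Two finite subsets `P = {s₁ < s₂ < … < s_p}` and `Q = {t₁ < t₂ < … < t_p}` of a
linear order alternate if either `s₁ < t₁ < s₂ < t₂ < … < s_p < t_p` or
`t₁ < s₁ < t₂ < s₂ < … < t_p < s_p`. -/
def Alternates {α : Type*} [LinearOrder α] (P Q : Finset α) : Prop :=
  ∃ (p : ℕ) (f g : Fin p → α), StrictMono f ∧ StrictMono g ∧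
    Set.range f = (P : Set α) ∧ Set.range g = (Q : Set α) ∧
    (((∀ i : Fin p, f i < g i) ∧ ∀ i j : Fin p, (i : ℕ) + 1 = (j : ℕ) → g i < f j) ∨
      ((∀ i : Fin p, g i < f i) ∧ ∀ i j : Fin p, (i : ℕ) + 1 = (j : ℕ) → f i < g j))

namespace Alt13

def eF (j i : ℕ) : ℕ := if i < j then 2*i+1 else 2*i+2
def fF (m i : ℕ) : ℕ := if i < m then 2*i+2 else 2*i+3

lemma eF_mono (j : ℕ) : StrictMono (eF j) := by
  intro a b h; unfold eF; split <;> split <;> omega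

lemma fF_mono (m : ℕ) : StrictMono (fF m) := by
  intro a b h; unfold fF; split <;> split <;> omega

def E (k j : ℕ) : Finset ℕ := (Finset.range (k+1)).image (eF j)
def F (k m : ℕ) : Finset ℕ := (Finset.range (k+1)).image (fF m)

lemma mem_E {k j n : ℕ} : n ∈ E k j ↔ ∃ i, i < k+1 ∧ eF j i = n := by
  simp [E, Finset.mem_image, Finset.mem_range]

lemma mem_F {k m n : ℕ} : n ∈ F k m ↔ ∃ i, i < k+1 ∧ fF m i = n := by
  simp [F, Finset.mem_image, Finset.mem_range]

lemma card_E (k j : ℕ) : (E k j).card = k + 1 := by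
  rw [E, Finset.card_image_of_injective _ (eF_mono j).injective, Finset.card_range]

lemma card_F (k m : ℕ) : (F k m).card = k + 1 := by
  rw [F, Finset.card_image_of_injective _ (fF_mono m).injective, Finset.card_range]

lemma even_mem_E {k j i : ℕ} : (2*i+2 ∈ E k j) ↔ (j ≤ i ∧ i < k+1) := by
  rw [mem_E]
  constructor
  · rintro ⟨i', hi', he⟩
    unfold eF at he
    split at he <;> omega
  · rintro ⟨h1, h2⟩
    exact ⟨i, h2, by unfold eF; rw [if_neg (by omega)]⟩

lemma odd_mem_E {k j i : ℕ} : (2*i+3 ∈ E k j) ↔ (i+1 < j ∧ i+1 < k+1) := by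
  rw [mem_E]
  constructor
  · rintro ⟨i', hi', he⟩
    unfold eF at he
    split at he <;> omega
  · rintro ⟨h1, h2⟩
    exact ⟨i+1, h2, by unfold eF; rw [if_pos (by omega)]; omega⟩

lemma strictMono_unique {p : ℕ} {f g : Fin p → ℕ} (hf : StrictMono f) (hg : StrictMono g)
    (h : Set.range f = Set.range g) : f = g := by
  classical
  set s : Finset ℕ := Finset.image f Finset.univ with hs
  have hcs : s.card = p := by
    rw [hs, Finset.card_image_of_injective _ hf.injective, Finset.card_univ, Fintype.card_fin]
  have hfs : ∀ x, f x ∈ s := fun x => Finset.mem_image_of_mem f (Finset.mem_univ x)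
  have hrg : ∀ x, g x ∈ s := by
    intro x
    have : g x ∈ Set.range f := h ▸ Set.mem_range_self x
    obtain ⟨y, hy⟩ := this
    exact hy ▸ hfs y
  rw [Finset.orderEmbOfFin_unique hcs hfs hf, Finset.orderEmbOfFin_unique hcs hrg hg]

lemma range_eq_coe {p : ℕ} {f : Fin p → ℕ} {s : Finset ℕ} (h : Set.range f = ↑s) :
    Finset.image f Finset.univ = s := by
  apply Finset.coe_injective
  rw [Finset.coe_image, Finset.coe_univ, Set.image_univ, h]

/-- Step 1: I is E k j for some j. -/
lemma exists_j (k : ℕ) (hk : 1 ≤ k) (I : Finset ℕ)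
    (hI : I ⊆ Finset.Icc 1 (2 * k + 3)) (hIcard : I.card = k + 1)
    (hcons : ∀ t, t ∈ I → t + 1 ∉ I) (h1 : 1 ∈ I) (hlast : 2 * k + 3 ∉ I) :
    ∃ j, 1 ≤ j ∧ j ≤ k + 1 ∧ I = E k j := by
  classical
  -- pair surjectivity
  have hbound : ∀ n ∈ I, 1 ≤ n ∧ n ≤ 2*k+2 := by
    intro n hn
    have := hI hn
    rw [Finset.mem_Icc] at this
    have : n ≠ 2*k+3 := fun h => hlast (h ▸ hn)
    have := hI hn; rw [Finset.mem_Icc] at this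
    omega
  have himg : Finset.image (fun n => (n-1)/2) I = Finset.range (k+1) := by
    apply Finset.eq_of_subset_of_card_le
    · intro m hm
      rw [Finset.mem_image] at hm
      obtain ⟨n, hn, hm⟩ := hm
      have := hbound n hn
      rw [Finset.mem_range]
      omega
    · rw [Finset.card_range, ← hIcard]
      apply Finset.card_le_card_of_injOn (fun n => (n-1)/2)
      · intro m hm
        rw [Finset.mem_coe, Finset.mem_image]
        exact ⟨m, hm, rfl⟩
      · intro a ha b hb hab
        have ha' := hbound a ha
        have hb' := hbound b hb
        simp only at hab
        -- a,b in same pair: equal or consecutive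
        by_contra hne
        rcases Nat.lt_or_ge a b with h | h
        · have : b = a + 1 := by omega
          exact hcons a ha (this ▸ hb)
        · have : a = b + 1 := by omega
          exact hcons b hb (this ▸ ha)
  have hpair : ∀ i, i < k+1 → (2*i+1 ∈ I ∨ 2*i+2 ∈ I) := by
    intro i hi
    have : i ∈ Finset.image (fun n => (n-1)/2) I := by rw [himg, Finset.mem_range]; exact hi
    rw [Finset.mem_image] at this
    obtain ⟨n, hn, hni⟩ := this
    have := hbound n hn
    have : n = 2*i+1 ∨ n = 2*i+2 := by omega
    rcases this with h | h <;> [left; right] <;> exact h ▸ hn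
  have hex : ∃ i, 2*i+1 ∉ I := ⟨k+1, by rw [show 2*(k+1)+1 = 2*k+3 by ring]; exact hlast⟩
  set j := Nat.find hex with hj
  have hspec : 2*j+1 ∉ I := Nat.find_spec hex
  have hmin : ∀ i, i < j → 2*i+1 ∈ I := by
    intro i hi
    by_contra h
    have : Nat.find hex ≤ i := Nat.find_le h
    omega
  have hj1 : 1 ≤ j := by
    rcases Nat.eq_zero_or_pos j with h | h
    · exact absurd (h ▸ hspec) (by simpa using h1)
    · exact h
  have hjk : j ≤ k + 1 := Nat.find_le (by rw [show 2*(k+1)+1 = 2*k+3 by ring]; exact hlast)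
  -- for i with j ≤ i ≤ k : 2i+1 ∉ I and 2i+2 ∈ I
  have heven : ∀ i, j ≤ i → i ≤ k → (2*i+1 ∉ I ∧ 2*i+2 ∈ I) := by
    intro i hji hik
    induction i, hji using Nat.le_induction with
    | base => exact ⟨hspec, (hpair j (by omega)).resolve_left hspec⟩
    | succ n hn ih =>
      have hprev := ih (by omega)
      have hodd : 2*(n+1)+1 ∉ I := by
        have h2 := hcons (2*n+2) hprev.2
        have he : 2*(n+1)+1 = 2*n+2+1 := by omega
        rw [he]; exact h2
      exact ⟨hodd, (hpair (n+1) (by omega)).resolve_left hodd⟩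
  refine ⟨j, hj1, hjk, ?_⟩
  refine (Finset.eq_of_subset_of_card_le ?_ (by rw [card_E, hIcard])).symm
  intro n hn
  rw [mem_E] at hn
  obtain ⟨i, hi, rfl⟩ := hn
  unfold eF
  split
  · exact hmin i (by omega)
  · exact (heven i (by omega) (by omega)).2


lemma range_comp_val {p : ℕ} (f : ℕ → ℕ) :
    Set.range (fun i : Fin p => f i) = ↑((Finset.range p).image f) := by
  ext n
  constructor
  · rintro ⟨i, rfl⟩
    exact Finset.mem_coe.2 (Finset.mem_image.2 ⟨i.val, Finset.mem_range.2 i.isLt, rfl⟩)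
  · intro hn
    obtain ⟨i, hi, rfl⟩ := Finset.mem_image.1 (Finset.mem_coe.1 hn)
    exact ⟨⟨i, Finset.mem_range.1 hi⟩, rfl⟩

lemma easy_dir (k j m : ℕ) (hj1 : 1 ≤ j) (hjk : j ≤ k+1) (hm1 : j - 1 ≤ m) (hm2 : m ≤ j) :
    F k m ⊆ Finset.Icc 1 (2*k+3) \ E k j ∧ (F k m).card = k+1 ∧ Alternates (E k j) (F k m) := by
  refine ⟨?_, card_F k m, ?_⟩
  · intro n hn
    rw [mem_F] at hn
    obtain ⟨i, hi, rfl⟩ := hn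
    rw [Finset.mem_sdiff, Finset.mem_Icc]
    refine ⟨by unfold fF; split <;> omega, ?_⟩
    unfold fF
    split
    · rw [even_mem_E]; omega
    · rw [odd_mem_E]; omega
  · refine ⟨k+1, fun i => eF j i, fun i => fF m i,
      (eF_mono j).comp (fun _ _ h => h), (fF_mono m).comp (fun _ _ h => h),
      range_comp_val (eF j), range_comp_val (fF m), Or.inl ⟨?_, ?_⟩⟩
    · intro i
      simp only [eF, fF]; split <;> split <;> omega
    · intro i i' h
      simp only [eF, fF]; split <;> split <;> omega

lemma eF_bounds (j i : ℕ) : 2*i+1 ≤ eF j i ∧ eF j i ≤ 2*i+2 := by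
  unfold eF; split <;> omega

lemma hard_dir (k j : ℕ) (J : Finset ℕ) (hj1 : 1 ≤ j) (hjk : j ≤ k+1)
    (hsub : J ⊆ Finset.Icc 1 (2*k+3) \ E k j) (hcard : J.card = k+1)
    (halt : Alternates (E k j) J) : J = F k j ∨ J = F k (j-1) := by
  classical
  obtain ⟨p, f, g, hf, hg, hrf, hrg, hd⟩ := halt
  have hpk : p = k + 1 := by
    have h1 := range_eq_coe hrf
    have h2 : (Finset.image f Finset.univ).card = p := by
      rw [Finset.card_image_of_injective _ hf.injective, Finset.card_univ, Fintype.card_fin]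
    rw [h1, card_E] at h2; omega
  subst hpk
  have hfe : f = fun i : Fin (k+1) => eF j i := by
    apply strictMono_unique hf (fun a b h => eF_mono j h)
    rw [hrf, range_comp_val (eF j)]
    rfl
  subst hfe
  have hgJ : ∀ i, g i ∈ J := fun i => Finset.mem_coe.1 (hrg ▸ Set.mem_range_self i)
  have hgIcc : ∀ i, 1 ≤ g i ∧ g i ≤ 2*k+3 ∧ g i ∉ E k j := by
    intro i
    have h := hsub (hgJ i)
    rw [Finset.mem_sdiff, Finset.mem_Icc] at h
    exact ⟨h.1.1, h.1.2, h.2⟩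
  rcases hd with ⟨hlt, hsep⟩ | ⟨hlt, hsep⟩
  swap
  · exfalso
    have h0 := hlt 0
    have h0' : eF j ((0 : Fin (k+1)) : ℕ) = 1 := by
      unfold eF; rw [if_pos (by simp; omega)]; simp
    have := (hgIcc 0).1
    simp only [h0'] at h0
    omega
  set G : ℕ → ℕ := fun i => if h : i < k+1 then g ⟨i, h⟩ else 2*i+3 with hGdef
  have hGbin : ∀ i, G i = 2*i+2 ∨ G i = 2*i+3 := by
    intro i
    by_cases h : i < k+1
    · have hlow : eF j i < g ⟨i,h⟩ := hlt ⟨i,h⟩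
      have hb1 := eF_bounds j i
      rw [hGdef]
      simp only [dif_pos h]
      by_cases h2 : i+1 < k+1
      · have hhigh : g ⟨i,h⟩ < eF j (i+1) := hsep ⟨i,h⟩ ⟨i+1,h2⟩ rfl
        have hb2 := eF_bounds j (i+1)
        omega
      · have hub := (hgIcc ⟨i,h⟩).2.1
        omega
    · right; rw [hGdef]; simp only [dif_neg h]
  have hGdc : ∀ i, G (i+1) = 2*(i+1)+2 → G i = 2*i+2 := by
    intro i hGi1
    by_cases h2 : i+1 < k+1
    · have h : i < k+1 := by omega
      rw [hGdef] at hGi1 ⊢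
      simp only [dif_pos h2] at hGi1
      simp only [dif_pos h]
      have hhigh : g ⟨i,h⟩ < eF j (i+1) := hsep ⟨i,h⟩ ⟨i+1,h2⟩ rfl
      have hlow2 : eF j (i+1) < g ⟨i+1,h2⟩ := hlt ⟨i+1,h2⟩
      have hb2 := eF_bounds j (i+1)
      have hbin := hGbin i
      rw [hGdef] at hbin
      simp only [dif_pos h] at hbin
      omega
    · exfalso
      rw [hGdef] at hGi1
      simp only [dif_neg h2] at hGi1
      omega
  have hexG : ∃ i, G i ≠ 2*i+2 := by
    refine ⟨k+1, ?_⟩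
    rw [hGdef]
    simp only [dif_neg (lt_irrefl (k+1))]
    omega
  set m := Nat.find hexG with hm
  have hmle : m ≤ k+1 := Nat.find_le (by rw [hGdef]; simp only [dif_neg (lt_irrefl (k+1))]; omega)
  have hmlt : ∀ i, i < m → G i = 2*i+2 := by
    intro i hi
    by_contra h
    have : Nat.find hexG ≤ i := Nat.find_le h
    omega
  have hmge : ∀ i, m ≤ i → G i = 2*i+3 := by
    intro i hi
    induction i, hi using Nat.le_induction with
    | base => exact (hGbin m).resolve_left (Nat.find_spec hexG)
    | succ n hn ih =>
      rcases hGbin (n+1) with h | h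
      · have := hGdc n h
        rw [ih] at this
        omega
      · exact h
  -- m ≤ j
  have hmj1 : m ≤ j := by
    by_cases hm0 : m = 0
    · omega
    · have h : m - 1 < k+1 := by omega
      have hG := hmlt (m-1) (by omega)
      rw [hGdef] at hG
      simp only [dif_pos h] at hG
      have hnE := (hgIcc ⟨m-1,h⟩).2.2
      rw [hG, even_mem_E] at hnE
      omega
  have hmj2 : j ≤ m+1 := by
    by_cases h : m < k+1
    · have hG := hmge m le_rfl
      rw [hGdef] at hG
      simp only [dif_pos h] at hG
      have hnE := (hgIcc ⟨m,h⟩).2.2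
      rw [hG, odd_mem_E] at hnE
      omega
    · omega
  have hgf : ∀ (i : ℕ) (h : i < k+1), g ⟨i,h⟩ = fF m i := by
    intro i h
    have hGi : G i = g ⟨i,h⟩ := by rw [hGdef]; simp only [dif_pos h]
    unfold fF
    split
    · rename_i hlt2; rw [← hGi]; exact hmlt i hlt2
    · rename_i hge; rw [← hGi]; exact hmge i (by omega)
  have hJ : J = F k m := by
    have h1 := range_eq_coe hrg
    rw [← h1]
    apply Finset.ext
    intro n
    rw [Finset.mem_image, mem_F]
    constructor
    · rintro ⟨i, -, rfl⟩
      exact ⟨i.val, i.isLt, by simpa using (hgf i.val i.isLt).symm⟩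
    · rintro ⟨i, hi, rfl⟩
      exact ⟨⟨i,hi⟩, Finset.mem_univ _, hgf i hi⟩
  have hmj : m = j ∨ m = j - 1 := by omega
  rcases hmj with h | h
  · left; rw [← h]; exact hJ
  · right; rw [← h]; exact hJ

end Alt13

theorem stmt13 (k : ℕ) (hk : 1 ≤ k) (I : Finset ℕ)
    (hI : I ⊆ Finset.Icc 1 (2 * k + 3)) (hIcard : I.card = k + 1)
    (hcons : ∀ t, t ∈ I → t + 1 ∉ I) (h1 : 1 ∈ I) (hlast : 2 * k + 3 ∉ I) :
    Set.ncard {J : Finset ℕ | J ⊆ Finset.Icc 1 (2 * k + 3) \ I ∧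
      J.card = k + 1 ∧ Alternates I J} = 2 := by
  obtain ⟨j, hj1, hjk, rfl⟩ := Alt13.exists_j k hk I hI hIcard hcons h1 hlast
  have hne : Alt13.F k j ≠ Alt13.F k (j-1) := by
    intro h
    have h1' : 2*(j-1)+3 ∈ Alt13.F k (j-1) :=
      Alt13.mem_F.2 ⟨j-1, by omega, by unfold Alt13.fF; rw [if_neg (by omega)]⟩
    rw [← h, Alt13.mem_F] at h1'
    obtain ⟨i, hi, he⟩ := h1'
    unfold Alt13.fF at he
    split at he <;> omega
  have hset : {J : Finset ℕ | J ⊆ Finset.Icc 1 (2 * k + 3) \ Alt13.E k j ∧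
      J.card = k + 1 ∧ Alternates (Alt13.E k j) J} = {Alt13.F k j, Alt13.F k (j-1)} := by
    ext J
    simp only [Set.mem_setOf_eq, Set.mem_insert_iff, Set.mem_singleton_iff]
    constructor
    · rintro ⟨hs, hc, ha⟩
      exact Alt13.hard_dir k j J hj1 hjk hs hc ha
    · rintro (rfl | rfl)
      · exact Alt13.easy_dir k j j hj1 hjk (by omega) le_rfl
      · exact Alt13.easy_dir k j (j-1) hj1 hjk le_rfl (by omega)
  rw [hset]
  exact Set.ncard_pair hne
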